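/- The matrix M^(r) over ℚ of size C(r+1,2) built from the functions f_t has rank exactly r. -/

import Mathlib

/-- Generalized binomial coefficient `C(n,k)` for integers, zero when `k < 0`. -/
noncomputable def genChoose (n k : ℤ) : ℤ :=
  if k < 0 then 0 else Ring.choose n k.toNat

/-- The function `f_t(i,j)` from the characteristic-zero construction. -/
noncomputable def ft (t : ℤ) (i j : ℕ) : ℤ :=
  if 0 < t then genChoose (t - 1) ((j : ℤ) - i - 1)
  else if i < j then (-1) ^ (j - i) * genChoose (-t - 1 + j - i) (-t - 1)
  else (-1) ^ ((i : ℤ) - j - t).toNat * genChoose ((i : ℤ) - j - 1) (-t)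

/-- The block fooling-set matrix `M^(r)` over `ℚ`: block `(a,b)` (0-indexed here,
so `a,b ∈ {0,…,r-1}` correspond to `a+1,b+1` in 1-indexed notation) has height
`r - a` and width `r - b`, with entries `f_{a-b}(i,j)` (1-indexed `i,j`). -/
noncomputable def Mr (r : ℕ) :
    Matrix ((a : Fin r) × Fin (r - a.val)) ((a : Fin r) × Fin (r - a.val)) ℚ :=
  fun x y => (ft ((x.1 : ℤ) - (y.1 : ℤ)) (x.2.val + 1) (y.2.val + 1) : ℚ)

lemma ringChoose_neg_one (k : ℕ) : Ring.choose (-1 : ℤ) k = (-1) ^ k := by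
  induction k with
  | zero => simp [Ring.choose_zero_right]
  | succ k ih =>
    have h := Ring.choose_succ_succ (-1 : ℤ) k
    rw [neg_add_cancel] at h
    rw [Ring.choose_zero_succ] at h
    have : Ring.choose (-1 : ℤ) (k+1) = -Ring.choose (-1 : ℤ) k := by linarith
    rw [this, ih]; ring

lemma genChoose_of_neg {n k : ℤ} (h : k < 0) : genChoose n k = 0 := by
  simp [genChoose, h]

lemma genChoose_zero_right (n : ℤ) : genChoose n 0 = 1 := by
  simp [genChoose, Ring.choose_zero_right]

lemma genChoose_pascal (n k : ℤ) :
    genChoose n k = genChoose (n-1) k + genChoose (n-1) (k-1) := by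
  rcases lt_trichotomy k 0 with hk | hk | hk
  · rw [genChoose_of_neg hk, genChoose_of_neg hk, genChoose_of_neg (by omega)]; ring
  · subst hk
    rw [genChoose_zero_right, genChoose_zero_right, genChoose_of_neg (by omega)]; ring
  · obtain ⟨m, hm⟩ : ∃ m : ℕ, k = (m : ℤ) + 1 := ⟨(k-1).toNat, by omega⟩
    subst hm
    unfold genChoose
    rw [if_neg (by omega), if_neg (by omega), if_neg (by omega)]
    have h1 : ((m:ℤ)+1).toNat = m + 1 := by omega
    have h2 : ((m:ℤ)+1-1).toNat = m := by omega
    rw [h1, h2]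
    have h := Ring.choose_succ_succ (n-1) m
    rw [sub_add_cancel] at h
    rw [h]; ring

lemma genChoose_neg_one {k : ℤ} (hk : 0 ≤ k) : genChoose (-1) k = (-1) ^ k.toNat := by
  rw [genChoose, if_neg (by omega), ringChoose_neg_one]

lemma genChoose_self {k : ℤ} (hk : 0 ≤ k) : genChoose k k = 1 := by
  rw [genChoose, if_neg (by omega)]
  have : (k : ℤ) = ((k.toNat : ℕ) : ℤ) := by omega
  rw [this, Ring.choose_natCast]
  norm_cast
  exact Nat.choose_self _
lemma genChoose_zero_left {k : ℤ} (hk : 0 < k) : genChoose 0 k = 0 := by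
  rw [genChoose, if_neg (by omega)]
  exact Ring.choose_zero_pos ℤ (by omega)


lemma ft_rec (t : ℤ) (i j : ℕ) : ft t i j = ft (t-1) i j + ft (t-1) (i+1) j := by
  unfold ft
  rcases lt_trichotomy t 1 with ht | ht | ht
  · -- t ≤ 0
    have ht0 : ¬ 0 < t := by omega
    have ht1 : ¬ 0 < t - 1 := by omega
    rw [if_neg ht0, if_neg ht1, if_neg ht1]
    rcases lt_trichotomy (i+1) j with hij | hij | hij
    · -- i + 1 < j
      obtain ⟨m, hm⟩ : ∃ m : ℕ, j = i + m + 2 := ⟨j - i - 2, by omega⟩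
      subst hm
      rw [if_pos (by omega), if_pos (by omega), if_pos (by omega)]
      rw [show i + m + 2 - i = m + 2 from by omega,
          show i + m + 2 - (i+1) = m + 1 from by omega]
      have hp := genChoose_pascal (-t + m + 2) (-t)
      push_cast
      ring_nf at hp ⊢
      linear_combination (-(-1:ℤ)^m) * hp
    · -- j = i + 1
      subst hij
      rw [if_pos (by omega), if_pos (by omega), if_neg (by omega)]
      rw [show i + 1 - i = 1 from by omega]
      have hp := genChoose_pascal (-t + 1) (-t)
      have hself : genChoose (-t) (-t) = 1 := genChoose_self (by omega)
      have hneg : genChoose (-1) (1 - t) = (-1) ^ (1-t).toNat := genChoose_neg_one (by omega)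
      have hsq : ((-1:ℤ)) ^ (1-t).toNat * (-1) ^ (1-t).toNat = 1 := by
        rw [← pow_add, show (1-t).toNat + (1-t).toNat = 2 * (1-t).toNat from by ring, pow_mul]
        norm_num
      push_cast
      ring_nf at hp hself ⊢
      rw [genChoose_neg_one (show (0:ℤ) ≤ 1 - t by omega), ← pow_add,
          show (1-t).toNat + (1-t).toNat = (1-t).toNat * 2 from by ring,
          show ((-1:ℤ)) ^ ((1-t).toNat * 2) = 1 from by rw [mul_comm, pow_mul]; norm_num]
      linear_combination hp + hself
    · -- j ≤ i
      rw [if_neg (by omega), if_neg (by omega), if_neg (by omega)]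
      rcases Nat.lt_or_ge j i with hji | hji
      · -- j < i
        obtain ⟨d, hd⟩ : ∃ d : ℕ, i = j + d + 1 := ⟨i - j - 1, by omega⟩
        subst hd
        have hp := genChoose_pascal ((d:ℤ)+1) (1-t)
        push_cast
        ring_nf at hp ⊢
        rw [show (2+(d:ℤ)-t).toNat = (1+(d:ℤ)-t).toNat + 1 from by omega,
            show (3+(d:ℤ)-t).toNat = (1+(d:ℤ)-t).toNat + 2 from by omega]
        linear_combination (-(-1:ℤ)^((1+(d:ℤ)-t).toNat)) * hp
      · -- j = i
        have : j = i := by omega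
        subst this
        have h1 : genChoose (-1) (-t) = (-1) ^ (-t).toNat := genChoose_neg_one (by omega)
        have h2 : genChoose (-1) (1-t) = (-1) ^ (1-t).toNat := genChoose_neg_one (by omega)
        have h3 : genChoose 0 (1-t) = 0 := genChoose_zero_left (by omega)
        have hsq1 : ((-1:ℤ)) ^ (-t).toNat * (-1) ^ (-t).toNat = 1 := by
          rw [← pow_add, show (-t).toNat + (-t).toNat = 2 * (-t).toNat from by ring, pow_mul]
          norm_num
        have hsq2 : ((-1:ℤ)) ^ (1-t).toNat * (-1) ^ (1-t).toNat = 1 := by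
          rw [← pow_add, show (1-t).toNat + (1-t).toNat = 2 * (1-t).toNat from by ring, pow_mul]
          norm_num
        push_cast
        ring_nf at h1 h2 h3 hsq1 hsq2 ⊢
        rw [h1, h2, h3, ← pow_add, ← pow_add,
            show (-t).toNat + (-t).toNat = (-t).toNat*2 from by ring,
            show (1-t).toNat+(1-t).toNat = (1-t).toNat*2 from by ring, hsq1, hsq2]
        ring
  · -- t = 1
    subst ht
    rw [if_pos (show (0:ℤ) < 1 by norm_num), if_neg (show ¬((0:ℤ) < 1-1) by norm_num),
        if_neg (show ¬((0:ℤ) < 1-1) by norm_num)]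
    rcases lt_trichotomy (i+1) j with hij | hij | hij
    · obtain ⟨m, hm⟩ : ∃ m : ℕ, j = i + m + 2 := ⟨j - i - 2, by omega⟩
      subst hm
      rw [if_pos (show i < i + m + 2 by omega), if_pos (show i + 1 < i + m + 2 by omega)]
      have h1 : genChoose 0 ((m:ℤ)+1) = 0 := genChoose_zero_left (by positivity)
      have h2 : ∀ x : ℤ, genChoose x (-1) = 0 := fun x => genChoose_of_neg (by norm_num)
      push_cast
      rw [h2, h2, show ((i:ℤ) + ↑m + 2 - ↑i - 1) = (m:ℤ)+1 from by ring, h1]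
      ring
    · subst hij
      rw [if_pos (show i < i + 1 by omega), if_neg (show ¬ (i + 1 < i + 1) by omega)]
      have h2 : ∀ x : ℤ, genChoose x (-1) = 0 := fun x => genChoose_of_neg (by norm_num)
      have h5 : ((i:ℤ)+1-((i:ℤ)+1)-0).toNat = 0 := by omega
      push_cast
      rw [h2, neg_zero, h5, genChoose_zero_right,
          show ((i:ℤ)+1-↑i-1) = 0 from by ring, genChoose_zero_right]
      norm_num
    · rw [if_neg (show ¬ (i < j) by omega), if_neg (show ¬ (i + 1 < j) by omega)]
      obtain ⟨d, hd⟩ : ∃ d : ℕ, i = j + d := ⟨i - j, by omega⟩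
      subst hd
      have h1 : genChoose 0 (-(d:ℤ)-1) = 0 := genChoose_of_neg (by omega)
      have e1 : ((j:ℤ)+↑d-↑j-0).toNat = d := by omega
      have e2 : ((j:ℤ)+↑d+1-↑j-0).toNat = d + 1 := by omega
      push_cast
      rw [neg_zero, e1, e2, genChoose_zero_right,
          show ((j:ℤ)+↑d+1-↑j-1) = (d:ℤ) from by ring,
          show ((j:ℤ)-(↑j+↑d)-1) = -(d:ℤ)-1 from by ring, h1, genChoose_zero_right]
      ring
  · -- 2 ≤ t
    rw [if_pos (by omega), if_pos (by omega), if_pos (by omega)]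
    have hp := genChoose_pascal (t-1) ((j:ℤ) - i - 1)
    push_cast
    ring_nf at hp ⊢
    linear_combination hp


lemma ft_zero_lt {i j : ℕ} (h : i < j) : ft 0 i j = 0 := by
  rw [ft, if_neg (by norm_num), if_pos h, genChoose_of_neg (by norm_num), mul_zero]

lemma ft_zero_self (i : ℕ) : ft 0 i i = 1 := by
  rw [ft, if_neg (by norm_num), if_neg (by omega)]
  rw [show ((i:ℤ) - i - 0) = 0 from by ring, show ((i:ℤ) - i - 1) = -1 from by ring,
      neg_zero, genChoose_zero_right]
  norm_num

lemma sum_pascal (a : ℕ) (g : ℕ → ℤ) :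
    ∑ k ∈ Finset.range (a+2), ((a+1).choose k : ℤ) * g k
      = ∑ k ∈ Finset.range (a+1), (a.choose k : ℤ) * g k
        + ∑ k ∈ Finset.range (a+1), (a.choose k : ℤ) * g (k+1) := by
  rw [Finset.sum_range_succ' (fun k => ((a+1).choose k : ℤ) * g k) (a+1)]
  simp only [Nat.choose_succ_succ, Nat.choose_zero_right]
  push_cast
  simp only [add_mul]
  rw [Finset.sum_add_distrib]
  rw [Finset.sum_range_succ' (fun k => (a.choose k : ℤ) * g k) a]
  rw [Finset.sum_range_succ (fun k => (a.choose (k+1) : ℤ) * g (k+1)) a]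
  rw [Nat.choose_succ_self]
  push_cast
  simp [Nat.choose_zero_right]
  ring

lemma ft_comb (a : ℕ) (t : ℤ) (i j : ℕ) :
    ft t i j = ∑ k ∈ Finset.range (a+1), (a.choose k : ℤ) * ft (t - a) (i + k) j := by
  induction a generalizing t i with
  | zero => simp
  | succ a ih =>
    rw [ih t i]
    have step : ∀ k, ft (t - a) (i + k) j
        = ft (t - (a+1)) (i + k) j + ft (t - (a+1)) (i + k + 1) j := by
      intro k
      have := ft_rec (t - a) (i + k) j
      rw [show (t - (a:ℤ) - 1) = t - ((a:ℕ)+1 : ℕ) from by push_cast; ring] at this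
      exact this
    calc ∑ k ∈ Finset.range (a+1), (a.choose k : ℤ) * ft (t - a) (i + k) j
        = ∑ k ∈ Finset.range (a+1), (a.choose k : ℤ)
            * (ft (t - (a+1)) (i + k) j + ft (t - (a+1)) (i + k + 1) j) := by
          exact Finset.sum_congr rfl fun k _ => by rw [step k]
      _ = ∑ k ∈ Finset.range (a+1), (a.choose k : ℤ) * ft (t - (a+1)) (i + k) j
            + ∑ k ∈ Finset.range (a+1), (a.choose k : ℤ) * ft (t - (a+1)) (i + (k+1)) j := by
          rw [← Finset.sum_add_distrib]
          exact Finset.sum_congr rfl fun k _ => by rw [← add_assoc]; ring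
      _ = ∑ k ∈ Finset.range (a+1+1), ((a+1).choose k : ℤ) * ft (t - (a+1)) (i + k) j := by
          rw [sum_pascal a (fun k => ft (t - (a+1)) (i + k) j)]


noncomputable def Pm (r : ℕ) : Matrix ((a : Fin r) × Fin (r - a.val)) (Fin r) ℚ :=
  fun x s => if x.2.val ≤ s.val then ((x.1.val.choose (s.val - x.2.val) : ℕ) : ℚ) else 0

noncomputable def Rm (r : ℕ) : Matrix (Fin r) ((a : Fin r) × Fin (r - a.val)) ℚ :=
  fun s y => ((ft (-(y.1.val : ℤ)) (s.val + 1) (y.2.val + 1) : ℤ) : ℚ)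

lemma card_Nr (r : ℕ) :
    Fintype.card ((a : Fin r) × Fin (r - a.val)) = Nat.choose (r + 1) 2 := by
  rw [Fintype.card_sigma]
  simp only [Fintype.card_fin]
  rw [Fin.sum_univ_eq_sum_range (fun a => r - a) r]
  have h1 : ∑ a ∈ Finset.range r, (r - a) = ∑ a ∈ Finset.range r, (a + 1) := by
    rw [← Finset.sum_range_reflect]
    exact Finset.sum_congr rfl fun k hk => by
      rw [Finset.mem_range] at hk; omega
  have h2 : ∑ a ∈ Finset.range r, (a + 1) = ∑ a ∈ Finset.range (r+1), a := by
    rw [Finset.sum_range_succ' (fun a => a) r]; simp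
  have h3 : (∑ a ∈ Finset.range (r+1), a) * 2 = (r+1) * r := by
    rw [Finset.sum_range_id_mul_two]; simp
  have h4 : Nat.choose (r+1) 2 = (r+1) * r / 2 := by
    rw [Nat.choose_two_right]; simp
  omega

lemma Mr_factor (r : ℕ) : Mr r = Pm r * Rm r := by
  ext x y
  obtain ⟨a, i⟩ := x
  obtain ⟨b, j⟩ := y
  rw [Matrix.mul_apply]
  have hiar : i.val + a.val + 1 ≤ r := by
    have := i.isLt; omega
  set F : ℕ → ℚ := fun n =>
    (if i.val ≤ n then ((a.val.choose (n - i.val) : ℕ) : ℚ) else 0)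
      * ((ft (-(b.val : ℤ)) (n + 1) (j.val + 1) : ℤ) : ℚ) with hF
  have hsum : (∑ s : Fin r, Pm r ⟨a, i⟩ s * Rm r s ⟨b, j⟩)
      = ∑ n ∈ Finset.range r, F n := Fin.sum_univ_eq_sum_range F r
  rw [hsum]
  have hsub : Finset.Ico i.val (i.val + a.val + 1) ⊆ Finset.range r := by
    intro n hn
    rw [Finset.mem_Ico] at hn
    rw [Finset.mem_range]
    omega
  have hvan : ∀ n ∈ Finset.range r, n ∉ Finset.Ico i.val (i.val + a.val + 1) → F n = 0 := by
    intro n _ hn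
    rw [Finset.mem_Ico] at hn
    rw [hF]
    by_cases h : i.val ≤ n
    · have : a.val < n - i.val := by omega
      simp only [h, if_pos, Nat.choose_eq_zero_of_lt this]
      norm_num
    · simp [h]
  rw [← Finset.sum_subset hsub hvan]
  rw [Finset.sum_Ico_eq_sum_range]
  rw [show i.val + a.val + 1 - i.val = a.val + 1 from by omega]
  have hstep : ∀ k ∈ Finset.range (a.val + 1), F (i.val + k)
      = ((a.val.choose k : ℤ) : ℚ) * ((ft (-(b.val : ℤ)) (i.val + 1 + k) (j.val + 1) : ℤ) : ℚ) := by
    intro k _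
    rw [hF]
    simp only [if_pos (Nat.le_add_right i.val k)]
    rw [show i.val + k - i.val = k from by omega,
        show i.val + k + 1 = i.val + 1 + k from by omega]
    push_cast
    ring
  rw [Finset.sum_congr rfl hstep]
  have key := ft_comb a.val ((a.val : ℤ) - (b.val : ℤ)) (i.val + 1) (j.val + 1)
  rw [show ((a.val : ℤ) - (b.val : ℤ) - (a.val : ℤ)) = -(b.val : ℤ) from by ring] at key
  show ((ft ((a.val : ℤ) - (b.val : ℤ)) (i.val + 1) (j.val + 1) : ℤ) : ℚ) = _
  rw [key]
  push_cast
  rfl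


theorem Mr_rank (r : ℕ) (hr : 1 ≤ r) :
    Fintype.card ((a : Fin r) × Fin (r - a.val)) = Nat.choose (r + 1) 2 ∧
    (Mr r).rank = r := by
  refine ⟨card_Nr r, ?_⟩
  have hupper : (Mr r).rank ≤ r := by
    rw [Mr_factor r]
    refine le_trans (Matrix.rank_mul_le_right _ _) ?_
    exact le_trans (Matrix.rank_le_card_height _) (by simp)
  have h0r : 0 < r := hr
  set N := (a : Fin r) × Fin (r - a.val) with hN
  set e : Fin r → N := fun s => ⟨⟨0, h0r⟩, ⟨s.val, by simpa using s.isLt⟩⟩ with he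
  set S : Matrix (Fin r) (Fin r) ℚ := (Mr r).submatrix e e with hS
  have hSent : ∀ s t : Fin r, S s t = ((ft 0 (s.val + 1) (t.val + 1) : ℤ) : ℚ) := by
    intro s t
    rw [hS]
    simp only [Matrix.submatrix_apply, he, Mr]
    norm_num
  have htri : S.BlockTriangular OrderDual.toDual := by
    intro s t hst
    have : s < t := hst
    rw [hSent s t, ft_zero_lt (by omega : s.val + 1 < t.val + 1)]
    norm_num
  have hdet : S.det = 1 := by
    rw [Matrix.det_of_lowerTriangular S htri]
    have : ∀ s : Fin r, S s s = 1 := by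
      intro s; rw [hSent s s, ft_zero_self]; norm_num
    simp [this]
  have hunit : IsUnit S := by
    rw [Matrix.isUnit_iff_isUnit_det, hdet]
    exact isUnit_one
  have hrankS : S.rank = r := by
    rw [Matrix.rank_of_isUnit S hunit, Fintype.card_fin]
  have hlower : r ≤ (Mr r).rank := by
    have h1 : ((1 : Matrix N N ℚ).submatrix e (Equiv.refl N))
        * ((Mr r).submatrix (Equiv.refl N) _root_.id)
        = ((1 : Matrix N N ℚ) * Mr r).submatrix e _root_.id :=
      Matrix.submatrix_mul_equiv _ _ _ _ _
    have h2 : (((1 : Matrix N N ℚ) * Mr r).submatrix e _root_.id).submatrix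
          (_root_.id : Fin r → Fin r) (Equiv.refl N)
        * ((1 : Matrix N N ℚ).submatrix (Equiv.refl N) e)
        = ((((1 : Matrix N N ℚ) * Mr r).submatrix e _root_.id) * (1 : Matrix N N ℚ)).submatrix
            _root_.id e :=
      Matrix.submatrix_mul_equiv _ _ _ _ _
    have hSeq : S = (((1 : Matrix N N ℚ).submatrix e (Equiv.refl N))
        * ((Mr r).submatrix (Equiv.refl N) _root_.id))
        * ((1 : Matrix N N ℚ).submatrix (Equiv.refl N) e) := by
      rw [h1]
      have := h2
      simp only [Equiv.coe_refl, Matrix.submatrix_id_id] at this ⊢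
      rw [this]
      simp [hS]
    calc r = S.rank := hrankS.symm
      _ ≤ _ := by
        rw [hSeq]
        refine le_trans (Matrix.rank_mul_le_left _ _) ?_
        refine le_trans (Matrix.rank_mul_le_right _ _) ?_
        simp
  omega
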